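/- Every 3-coloring γ : F₃⁴ → {1,2,3} contains a monochromatic 3-AP, i.e. there exist a, d ∈ F₃⁴ with d ≠ 0 and γ(a) = γ(a+d) = γ(a+2d). -/

import Mathlib

open Finset

def dotp {n : ℕ} (v x : Fin n → ZMod 3) : ZMod 3 := ∑ i, v i * x i

def Capfree {n : ℕ} (S : Finset (Fin n → ZMod 3)) : Prop :=
  ∀ x ∈ S, ∀ y ∈ S, ∀ z ∈ S, x + y + z = 0 → x = y ∨ x = z ∨ y = z

lemma dotp_sub {n : ℕ} (v x y : Fin n → ZMod 3) :
    dotp v (x - y) = dotp v x - dotp v y := by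
  simp [dotp, mul_sub, Finset.sum_sub_distrib]

lemma dotp_add {n : ℕ} (v x y : Fin n → ZMod 3) :
    dotp v (x + y) = dotp v x + dotp v y := by
  simp [dotp, mul_add, Finset.sum_add_distrib]

/-- A cap in a hyperplane slice injects into one lower dimension. -/
lemma slice_le {n B : ℕ}
    (hB : ∀ T : Finset (Fin n → ZMod 3), Capfree T → T.card ≤ B)
    (S : Finset (Fin (n+1) → ZMod 3)) (hS : Capfree S)
    (v : Fin (n+1) → ZMod 3) (hv : v ≠ 0) (j : ZMod 3) :
    (S.filter (fun x => dotp v x = j)).card ≤ B := by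
  obtain ⟨i, hi⟩ : ∃ i, v i ≠ 0 := by
    by_contra h; push_neg at h; exact hv (funext h)
  set T := S.filter (fun x => dotp v x = j) with hTdef
  set L : (Fin (n+1) → ZMod 3) → (Fin n → ZMod 3) := fun x k => x (i.succAbove k) with hL
  have key : ∀ d : Fin (n+1) → ZMod 3,
      (∀ k, d (i.succAbove k) = 0) → dotp v d = 0 → d = 0 := by
    intro d h1 h2
    have hdot : dotp v d = v i * d i := by
      rw [dotp, Fin.sum_univ_succAbove _ i]
      simp [h1]
    have hdi : d i = 0 := by
      rcases mul_eq_zero.mp (hdot ▸ h2) with h | h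
      · exact absurd h hi
      · exact h
    funext m
    rcases eq_or_ne m i with rfl | hm
    · exact hdi
    · obtain ⟨k, rfl⟩ := Fin.exists_succAbove_eq hm
      exact h1 k
  have hinj : Set.InjOn L T := by
    intro x hx y hy hxy
    have hx' := Finset.mem_filter.mp hx
    have hy' := Finset.mem_filter.mp hy
    have hsub : x - y = 0 := by
      apply key
      · intro k
        have := congrFun hxy k
        simpa [hL, sub_eq_zero] using this
      · rw [dotp_sub, hx'.2, hy'.2, sub_self]
    exact sub_eq_zero.mp hsub
  have hcap : Capfree (T.image L) := by
    intro x' hx' y' hy' z' hz' hsum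
    obtain ⟨x, hx, rfl⟩ := Finset.mem_image.mp hx'
    obtain ⟨y, hy, rfl⟩ := Finset.mem_image.mp hy'
    obtain ⟨z, hz, rfl⟩ := Finset.mem_image.mp hz'
    have hx2 := Finset.mem_filter.mp hx
    have hy2 := Finset.mem_filter.mp hy
    have hz2 := Finset.mem_filter.mp hz
    have hsum0 : x + y + z = 0 := by
      apply key
      · intro k
        have := congrFun hsum k
        simpa [hL] using this
      · rw [dotp_add, dotp_add, hx2.2, hy2.2, hz2.2]
        have h3 : (3 : ZMod 3) = 0 := by decide
        calc j + j + j = 3 * j := by ring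
          _ = 0 := by rw [h3, zero_mul]
    rcases hS x hx2.1 y hy2.1 z hz2.1 hsum0 with h | h | h
    · exact Or.inl (by rw [h])
    · exact Or.inr (Or.inl (by rw [h]))
    · exact Or.inr (Or.inr (by rw [h]))
  calc T.card = (T.image L).card := (Finset.card_image_of_injOn hinj).symm
    _ ≤ B := hB _ hcap

/-- The double-counting step: cap bound in dimension n+1 from a cap bound in dimension n. -/
lemma step {n : ℕ} (B c e s₀ M : ℕ) (D : Finset (Fin (n+1) → ZMod 3))
    (hD0 : (0 : Fin (n+1) → ZMod 3) ∉ D)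
    (hDcard : D.card = c + e)
    (hD : ∀ d : Fin (n+1) → ZMod 3, d ≠ 0 → (D.filter (fun v => dotp v d = 0)).card = c)
    (hB : ∀ T : Finset (Fin n → ZMod 3), Capfree T → T.card ≤ B)
    (hM : ∀ a b c' : ℕ, a ≤ B → b ≤ B → c' ≤ B → a + b + c' = s₀ →
      a * a + b * b + c' * c' ≤ M)
    (harith : (c + e) * M < s₀ * (c * s₀ + e))
    (S : Finset (Fin (n+1) → ZMod 3)) (hS : Capfree S) : S.card < s₀ := by
  by_contra hlt
  push_neg at hlt
  obtain ⟨T, hTS, hTcard⟩ := Finset.exists_subset_card_eq hlt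
  have hT : Capfree T := fun x hx y hy z hz h =>
    hS x (hTS hx) y (hTS hy) z (hTS hz) h
  -- the quantity counted two ways
  set N := ∑ v ∈ D, ((T ×ˢ T).filter (fun p => dotp v p.1 = dotp v p.2)).card with hN
  -- upper bound
  have upper : N ≤ (c + e) * M := by
    have hterm : ∀ v ∈ D,
        ((T ×ˢ T).filter (fun p => dotp v p.1 = dotp v p.2)).card ≤ M := by
      intro v hv
      have hv0 : v ≠ 0 := fun h => hD0 (h ▸ hv)
      have hfib : ((T ×ˢ T).filter (fun p => dotp v p.1 = dotp v p.2)).card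
          = ∑ j : ZMod 3,
            ((T.filter (fun x => dotp v x = j)) ×ˢ (T.filter (fun x => dotp v x = j))).card := by
        rw [Finset.card_eq_sum_card_fiberwise
          (f := fun p => dotp v p.1) (t := Finset.univ) (fun x _ => Finset.mem_univ _)]
        apply Finset.sum_congr rfl
        intro j _
        congr 1
        ext p
        simp only [Finset.mem_filter, Finset.mem_product]
        constructor
        · rintro ⟨⟨⟨h1, h2⟩, h3⟩, h4⟩
          exact ⟨⟨h1, h4⟩, h2, h3 ▸ h4⟩
        · rintro ⟨⟨h1, h4⟩, h2, h5⟩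
          exact ⟨⟨⟨h1, h2⟩, h4.trans h5.symm⟩, h4⟩
      have hsumcard : ∑ j : ZMod 3, (T.filter (fun x => dotp v x = j)).card = s₀ := by
        rw [← hTcard]
        exact (Finset.card_eq_sum_card_fiberwise
          (f := fun x => dotp v x) (t := Finset.univ) (fun x _ => Finset.mem_univ _)).symm
      rw [hfib]
      have hb : ∀ j : ZMod 3, (T.filter (fun x => dotp v x = j)).card ≤ B :=
        fun j => slice_le hB T hT v hv0 j
      have e3 : ∀ f : ZMod 3 → ℕ, ∑ j : ZMod 3, f j = f 0 + f 1 + f 2 := by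
        intro f
        show ∑ j : Fin 3, f j = _
        exact Fin.sum_univ_three f
      rw [e3] at hsumcard ⊢
      simp only [Finset.card_product]
      exact hM _ _ _ (hb 0) (hb 1) (hb 2) hsumcard
    calc N ≤ ∑ _v ∈ D, M := Finset.sum_le_sum hterm
      _ = D.card * M := by rw [Finset.sum_const, smul_eq_mul]
      _ = (c + e) * M := by rw [hDcard]
  -- lower bound (exact count)
  have lower : N = s₀ * (c * s₀ + e) := by
    have h1 : N = ∑ p ∈ T ×ˢ T, (D.filter (fun v => dotp v p.1 = dotp v p.2)).card := by
      rw [hN]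
      simp only [Finset.card_filter]
      rw [Finset.sum_comm]
    have h2 : ∀ p ∈ T ×ˢ T,
        (D.filter (fun v => dotp v p.1 = dotp v p.2)).card
          = if p.1 = p.2 then c + e else c := by
      intro p _
      by_cases h : p.1 = p.2
      · rw [if_pos h, ← hDcard]
        congr 1
        apply Finset.filter_true_of_mem
        intro v _
        rw [h]
      · rw [if_neg h]
        have hd : p.1 - p.2 ≠ 0 := sub_ne_zero_of_ne h
        rw [← hD _ hd]
        congr 1
        ext v
        simp [dotp_sub, sub_eq_zero]
    rw [h1, Finset.sum_congr rfl h2, Finset.sum_product]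
    have h3 : ∀ x ∈ T, (∑ y ∈ T, if x = y then c + e else c) = c * s₀ + e := by
      intro x hx
      have : ∀ y : Fin (n+1) → ZMod 3, (if x = y then c + e else c)
          = c + (if x = y then e else 0) := by
        intro y; by_cases h : x = y <;> simp [h]
      rw [Finset.sum_congr rfl (fun y _ => this y), Finset.sum_add_distrib,
        Finset.sum_const, Finset.sum_ite_eq T x (fun _ => e), if_pos hx,
        smul_eq_mul, hTcard]
      ring
    rw [Finset.sum_congr rfl h3, Finset.sum_const, hTcard, smul_eq_mul]
  omega

lemma cap1 : ∀ S : Finset (Fin 1 → ZMod 3), Capfree S → S.card ≤ 2 := by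
  intro S hS
  by_contra h
  push_neg at h
  have hle : S.card ≤ Fintype.card (Fin 1 → ZMod 3) := Finset.card_le_univ S
  have h3 : Fintype.card (Fin 1 → ZMod 3) = 3 := by decide
  have hcard : S = Finset.univ := Finset.eq_univ_of_card S (by omega)
  have hmem : ∀ w : Fin 1 → ZMod 3, w ∈ S := fun w => hcard ▸ Finset.mem_univ w
  have := hS (fun _ => 0) (hmem _) (fun _ => 1) (hmem _) (fun _ => 2) (hmem _) (by decide)
  rcases this with h' | h' | h' <;> exact absurd h' (by decide)

def D2 : Finset (Fin 2 → ZMod 3) := {![0,1], ![1,0], ![1,1], ![1,2]}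
def D3 : Finset (Fin 3 → ZMod 3) := {![0,0,1], ![0,1,0], ![0,1,1], ![0,1,2], ![1,0,0], ![1,0,1], ![1,0,2], ![1,1,0], ![1,1,1], ![1,1,2], ![1,2,0], ![1,2,1], ![1,2,2]}
def D4 : Finset (Fin 4 → ZMod 3) := {![0,0,0,1], ![0,0,1,0], ![0,0,1,1], ![0,0,1,2], ![0,1,0,0], ![0,1,0,1], ![0,1,0,2], ![0,1,1,0], ![0,1,1,1], ![0,1,1,2], ![0,1,2,0], ![0,1,2,1], ![0,1,2,2], ![1,0,0,0], ![1,0,0,1], ![1,0,0,2], ![1,0,1,0], ![1,0,1,1], ![1,0,1,2], ![1,0,2,0], ![1,0,2,1], ![1,0,2,2], ![1,1,0,0], ![1,1,0,1], ![1,1,0,2], ![1,1,1,0], ![1,1,1,1], ![1,1,1,2], ![1,1,2,0], ![1,1,2,1], ![1,1,2,2], ![1,2,0,0], ![1,2,0,1], ![1,2,0,2], ![1,2,1,0], ![1,2,1,1], ![1,2,1,2], ![1,2,2,0], ![1,2,2,1], ![1,2,2,2]}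

lemma cap2 : ∀ S : Finset (Fin 2 → ZMod 3), Capfree S → S.card ≤ 4 := by
  intro S hS
  have := step 2 1 3 5 9 D2 (by decide) (by decide)
    (by decide) cap1
    (by intro a b c' ha hb hc habc; interval_cases a <;> interval_cases b <;> interval_cases c' <;> omega)
    (by norm_num) S hS
  omega

lemma cap3 : ∀ S : Finset (Fin 3 → ZMod 3), Capfree S → S.card ≤ 9 := by
  intro S hS
  have := step 4 4 9 10 36 D3 (by decide) (by decide)
    (by decide) cap2
    (by intro a b c' ha hb hc habc; interval_cases a <;> interval_cases b <;> interval_cases c' <;> omega)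
    (by norm_num) S hS
  omega

lemma cap4 : ∀ S : Finset (Fin 4 → ZMod 3), Capfree S → S.card ≤ 26 := by
  intro S hS
  have := step 9 13 27 27 243 D4 (by decide) (by decide)
    (by decide) cap3
    (by intro a b c' ha hb hc habc; interval_cases a <;> interval_cases b <;> interval_cases c' <;> omega)
    (by norm_num) S hS
  omega

/-- Every 3-coloring of `F₃⁴` contains a monochromatic 3-term arithmetic progression. -/
theorem exists_monochromatic_threeAP_threeColoring_F3_dim4
    (γ : (Fin 4 → ZMod 3) → Fin 3) :
    ∃ a d : Fin 4 → ZMod 3, d ≠ 0 ∧ γ a = γ (a + d) ∧ γ (a + d) = γ (a + d + d) := by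
  by_contra hcon
  push_neg at hcon
  have hcap : ∀ cc : Fin 3, Capfree (Finset.univ.filter fun x => γ x = cc) := by
    intro cc x hx y hy z hz hsum
    by_contra hne
    push_neg at hne
    obtain ⟨hxy, -, -⟩ := hne
    have hx' := (Finset.mem_filter.mp hx).2
    have hy' := (Finset.mem_filter.mp hy).2
    have hz' := (Finset.mem_filter.mp hz).2
    have h3y : y + y + y = 0 := by
      funext t
      have : ∀ u : ZMod 3, u + u + u = 0 := by decide
      exact this (y t)
    have e1 : x + (y - x) = y := by ring
    have e2 : y + (y - x) = z := by linear_combination h3y - hsum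
    have hd : y - x ≠ 0 := sub_ne_zero_of_ne (Ne.symm hxy)
    have hgood := hcon x (y - x) hd
    rw [e1] at hgood
    have hfirst : γ x = γ y := hx'.trans hy'.symm
    have := hgood hfirst
    rw [e2] at this
    exact this (hy'.trans hz'.symm)
  have hcard : ∀ cc : Fin 3, (Finset.univ.filter fun x => γ x = cc).card ≤ 26 :=
    fun cc => cap4 _ (hcap cc)
  have hsum : ∑ cc : Fin 3, (Finset.univ.filter fun x => γ x = cc).card = 81 := by
    rw [← Finset.card_eq_sum_card_fiberwise (f := γ) (t := Finset.univ)
      (fun x _ => Finset.mem_univ _)]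
    simp only [Finset.card_univ]
    decide
  rw [Fin.sum_univ_three] at hsum
  have := hcard 0
  have := hcard 1
  have := hcard 2
  omega
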